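/- Let V : ℝ → ℝ be continuous and let μ_V be a compactly supported probability measure on ℝ with bounded density and finite logarithmic energy, such that h^{μ_V} + V = c_V on supp(μ_V) for a constant c_V, where h^{μ_V} = (−log|·|)∗μ_V; set ζ_V = h^{μ_V} + V − c_V. Then for every N and every X_N = (x_1,…,x_N) ∈ ℝ^N with pairwise distinct coordinates, H_N^V(X_N) = N²·I_V(μ_V) + N·∑_{i=1}^N ζ_V(x_i) + F_N(X_N, μ_V). -/

import Mathlib

open MeasureTheory Real Set Filter
open scoped Classical Topology ENNReal NNReal

noncomputable section

/-! ## Generic log-gas quantities -/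

/-- Hamiltonian of the one-dimensional log-gas with potential `V`. -/
def Hamil (V : ℝ → ℝ) (N : ℕ) (X : Fin N → ℝ) : ℝ :=
  (1/2) * ∑ i : Fin N, ∑ j : Fin N, (if i ≠ j then -Real.log |X i - X j| else 0)
    + N * ∑ i : Fin N, V (X i)

/-- Partition function `Z_{N,β}`. -/
def partZ (β : ℝ) (V : ℝ → ℝ) (N : ℕ) : ℝ :=
  ∫ X : Fin N → ℝ, Real.exp (-β * Hamil V N X)

/-- Gibbs measure `P_{N,β}`. -/
def gibbs (β : ℝ) (V : ℝ → ℝ) (N : ℕ) : Measure (Fin N → ℝ) :=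
  volume.withDensity fun X => ENNReal.ofReal (Real.exp (-β * Hamil V N X) / partZ β V N)

/-- Energy functional `I_W(μ)`. -/
def enFun (W : ℝ → ℝ) (μ : Measure ℝ) : ℝ :=
  (1/2) * ∫ x, (∫ y, (-Real.log |x - y|) ∂μ) ∂μ + ∫ x, W x ∂μ

/-- Fluctuation of the linear statistic `ξ`. -/
def fluct (μ : Measure ℝ) (N : ℕ) (ξ : ℝ → ℝ) (X : Fin N → ℝ) : ℝ :=
  (∑ i : Fin N, ξ (X i)) - N * ∫ x, ξ x ∂μ

/-- Double integral of a kernel `K` against the square of the fluctuation measure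
`∑ δ_{x_i} - Nμ`. -/
def fluctPair (μ : Measure ℝ) (N : ℕ) (K : ℝ → ℝ → ℝ) (X : Fin N → ℝ) : ℝ :=
  (∑ i : Fin N, ∑ j : Fin N, K (X i) (X j))
    - N * ∑ i : Fin N, ∫ y, K (X i) y ∂μ
    - N * ∑ j : Fin N, ∫ x, K x (X j) ∂μ
    + (N:ℝ)^2 * ∫ x, (∫ y, K x y ∂μ) ∂μ

/-- Next-order energy `F_N(X_N, μ)` (off-diagonal double integral of `-log` against
`(∑ δ_{x_i} - Nμ)⊗²`). -/
def nextOrderF (N : ℕ) (X : Fin N → ℝ) (μ : Measure ℝ) : ℝ :=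
  (1/2) * ((∑ i : Fin N, ∑ j : Fin N, (if i ≠ j then -Real.log |X i - X j| else 0))
    - 2 * N * ∑ i : Fin N, ∫ y, -Real.log |X i - y| ∂μ
    + (N:ℝ)^2 * ∫ x, (∫ y, -Real.log |x - y| ∂μ) ∂μ)

/-- `C^k` norm of a function: sup of the derivatives of order `≤ k`. -/
def Cnorm (k : ℕ) (θ : ℝ → ℝ) : ℝ :=
  ⨆ i : Fin (k+1), ⨆ x : ℝ, |iteratedDeriv i.1 θ x|

/-- Fourier transform with the convention `∫ f(x) e^{-iλx} dx`. -/
def fourierT (f : ℝ → ℂ) (l : ℝ) : ℂ :=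
  ∫ x : ℝ, f x * Complex.exp (-(Complex.I * (l : ℂ) * (x : ℂ)))

/-- Squared `H^{1/2}` seminorm of a complex-valued function. -/
def H12C (f : ℝ → ℂ) : ℝ :=
  (1/(4*π^2)) * ∫ l : ℝ, |l| * ‖fourierT f l‖^2

/-- Squared `H^{1/2}` seminorm of a real-valued function. -/
def H12 (θ : ℝ → ℝ) : ℝ := H12C fun x => (θ x : ℂ)

/-- Rescaled test function `ξ_{z,L} = θ((·-z)/L)`. -/
def resc (θ : ℝ → ℝ) (z L : ℝ) : ℝ → ℝ := fun x => θ ((x - z)/L)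

/-! ## Electrostatic machinery -/

/-- Euclidean norm on `ℝ²`. -/
def enorm2 (p : ℝ × ℝ) : ℝ := Real.sqrt (p.1^2 + p.2^2)

/-- Electrostatic potential of the configuration `Y` relative to the measure `μ`. -/
def elPot (μ : Measure ℝ) (N : ℕ) (Y : Fin N → ℝ) (p : ℝ × ℝ) : ℝ :=
  (∑ i : Fin N, -Real.log (enorm2 (p - (Y i, 0))))
    - ∫ y, -Real.log (enorm2 (p - (y, 0))) ∂μ

/-- Planar truncation `f̄_η`. -/
def fbar (η : ℝ) (p : ℝ × ℝ) : ℝ := max (Real.log (η / enorm2 p)) 0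

/-- One-dimensional truncation `f_η`. -/
def ftr (η : ℝ) (x : ℝ) : ℝ := max (Real.log (η / |x|)) 0

/-- Minimal distances `r̃_i` relative to the set `Ω`. -/
def rtil (N : ℕ) (Y : Fin N → ℝ) (Ω : Set ℝ) (i : Fin N) : ℝ :=
  if Metric.infDist (Y i) (frontier Ω) < 1/2 then 1/4
  else (1/4) * (insert (1:ℝ)
      ((Finset.univ.filter fun j : Fin N => j ≠ i ∧ Y j ∈ Ω).image
        fun j => |Y i - Y j|)).min' (Finset.insert_nonempty _ _)

/-- Truncated electrostatic potential `u_{r̃}`. -/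
def elPotTr (μ : Measure ℝ) (N : ℕ) (Y : Fin N → ℝ) (Ω : Set ℝ) (p : ℝ × ℝ) : ℝ :=
  elPot μ N Y p - ∑ i : Fin N, fbar (rtil N Y Ω i) (p - (Y i, 0))

/-- Squared (Euclidean) gradient of a function on `ℝ²`. -/
def gradSq (f : ℝ × ℝ → ℝ) (p : ℝ × ℝ) : ℝ :=
  (fderiv ℝ f p (1, 0))^2 + (fderiv ℝ f p (0, 1))^2

/-- The true local energy `F^Ω(Y, μ)` at scale `L`. -/
def locEnergy (μ : Measure ℝ) (N : ℕ) (Y : Fin N → ℝ) (Ω : Set ℝ) (L : ℝ) : ℝ :=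
  (1/(4*π)) * ((∫ p in Ω ×ˢ Icc (-L) L, gradSq (elPotTr μ N Y Ω) p)
      - 2*π * ∑ i ∈ Finset.univ.filter (fun i : Fin N => Y i ∈ Ω), (-Real.log (rtil N Y Ω i)))
    - ∑ i ∈ Finset.univ.filter (fun i : Fin N => Y i ∈ Ω), ∫ x, ftr (rtil N Y Ω i) (x - Y i) ∂μ

/-- Number of points of the configuration lying in `Ω`. -/
def ptsIn (N : ℕ) (Y : Fin N → ℝ) (Ω : Set ℝ) : ℕ :=
  (Finset.univ.filter fun i : Fin N => Y i ∈ Ω).card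

/-- Transport map on points, `φ_t = id + tψ`. -/
def phiT (ψ : ℝ → ℝ) (t x : ℝ) : ℝ := x + t * ψ x

/-- Transport map on configurations. -/
def PhiN (ψ : ℝ → ℝ) (t : ℝ) (N : ℕ) (X : Fin N → ℝ) : Fin N → ℝ := fun i => phiT ψ t (X i)

/-- The condition `‖t ψ'‖_∞ < 1/2`. -/
def SmallPert (t : ℝ) (ψ : ℝ → ℝ) : Prop := ∃ ρ : ℝ, ρ < 1/2 ∧ ∀ x, |t * deriv ψ x| ≤ ρ

/-! ## The β-ensemble setup satisfying (A1)–(A4) -/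

/-- Data for a one-dimensional log-gas in the multi-cut, non-critical regime. -/
structure LogGas where
  β : ℝ
  V : ℝ → ℝ
  n : ℕ
  a : Fin n → ℝ
  b : Fin n → ℝ
  S : ℝ → ℝ
  cV : ℝ
  hβ : 0 < β
  hV : ContDiff ℝ 3 V
  hgrowth : Tendsto (fun x => V x + Real.log |x|) (cocompact ℝ) atTop
  hn : 0 < n
  hab : ∀ i, a i < b i
  hord : ∀ i j : Fin n, i < j → b i < a j
  hS : ContDiff ℝ (⊤ : ℕ∞) S

namespace LogGas

variable (g : LogGas)

/-- Support `Σ_V` of the equilibrium measure. -/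
def sptV : Set ℝ := ⋃ i, Icc (g.a i) (g.b i)

/-- `σ(x) = ∏ √(|x-aᵢ||x-bᵢ|)`. -/
def σf (x : ℝ) : ℝ := ∏ i, Real.sqrt (|x - g.a i| * |x - g.b i|)

/-- Density of the equilibrium measure. -/
def dens (x : ℝ) : ℝ := Set.indicator g.sptV (fun y => g.S y * g.σf y) x

/-- The equilibrium measure `μ_V`. -/
def μV : Measure ℝ := volume.withDensity fun x => ENNReal.ofReal (g.dens x)

/-- Logarithmic potential `h^{μ_V}`. -/
def hpot (x : ℝ) : ℝ := ∫ y, -Real.log |x - y| ∂g.μV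

/-- Effective potential `ζ_V`. -/
def ζV (x : ℝ) : ℝ := g.hpot x + g.V x - g.cV

/-- `d = (1/4) minᵢ (bᵢ - aᵢ)`. -/
def dB : ℝ := (1/4) * ⨅ i, (g.b i - g.a i)

/-- The bulk `𝖡`. -/
def Bulk : Set ℝ := {x ∈ g.sptV | g.dB ≤ Metric.infDist x (frontier g.sptV)}

/-- The blown-up bulk `𝖡' = N·𝖡`. -/
def Bulk' (N : ℕ) : Set ℝ := (fun x => (N:ℝ) * x) '' g.Bulk

/-- Density of the blown-up equilibrium measure. -/
def densN (N : ℕ) (x : ℝ) : ℝ := g.dens (x / N)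

/-- Blown-up equilibrium measure `μ` (total mass `N`). -/
def μN (N : ℕ) : Measure ℝ := volume.withDensity fun x => ENNReal.ofReal (g.densN N x)

/-- The endpoints of `Σ_V`. -/
def endpts : Finset ℝ := Finset.univ.image g.a ∪ Finset.univ.image g.b

/-- Minimal distance between two distinct endpoints of `Σ_V`. -/
def minGap : ℝ := sInf {r : ℝ | ∃ p ∈ g.endpts, ∃ q ∈ g.endpts, p ≠ q ∧ r = |p - q|}

/-- The Gibbs measure `P_{N,β}`. -/
def gibbsN (N : ℕ) : Measure (Fin N → ℝ) := gibbs g.β g.V N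

/-- Assumptions (A1)–(A4), together with the standing assumption that the partition
functions are finite and positive. -/
structure A : Prop where
  hSpos : ∀ x ∈ g.sptV, 0 < g.S x
  hprob : IsProbabilityMeasure g.μV
  hmin : ∀ μ : Measure ℝ, IsProbabilityMeasure μ →
    (∃ K : Set ℝ, IsCompact K ∧ μ Kᶜ = 0) → enFun g.V g.μV ≤ enFun g.V μ
  huniq : ∀ μ : Measure ℝ, IsProbabilityMeasure μ →
    (∃ K : Set ℝ, IsCompact K ∧ μ Kᶜ = 0) → enFun g.V μ = enFun g.V g.μV → μ = g.μV
  hEL : ∀ x ∈ g.sptV, g.hpot x + g.V x = g.cV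
  hζ : ∀ x ∉ g.sptV, 0 < g.ζV x
  hZint : ∀ N : ℕ, Integrable (fun X : Fin N → ℝ => Real.exp (-g.β * Hamil g.V N X))
  hZpos : ∀ N : ℕ, 0 < partZ g.β g.V N

/-- Characterization of the transport map `ψ` (with constant `cξ`) associated with the
test function `ξ`, relative to the neighborhood `U` of `Σ_V`. -/
def IsTransport (U : Set ℝ) (ξ ψ : ℝ → ℝ) (cξ : ℝ) : Prop :=
  (∀ x ∈ g.sptV, ψ x = -(1/(π^2 * g.S x)) * ∫ y in g.sptV, (ξ y - ξ x)/(g.σf y * (y - x)))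
  ∧ (∀ x ∈ U \ g.sptV,
      ψ x = ((∫ y in g.sptV, ψ y * g.dens y / (x - y)) + ξ x + cξ)
        / ((∫ y in g.sptV, g.dens y / (x - y)) - deriv g.V x))
  ∧ (∀ x ∈ U, -(ψ x) * deriv g.V x + (∫ y, (ψ x - ψ y)/(x - y) ∂g.μV) = ξ x + cξ)

/-- `U` is a bounded open neighborhood of `Σ_V` on which `ζ_V' = M σ` with `M > 0` smooth. -/
def GoodNbhd (U : Set ℝ) : Prop :=
  IsOpen U ∧ Bornology.IsBounded U ∧ g.sptV ⊆ U ∧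
  ∃ M : ℝ → ℝ, ContDiffOn ℝ (⊤ : ℕ∞) M (U \ g.sptV) ∧
    ∀ x ∈ U \ g.sptV, 0 < M x ∧ deriv g.ζV x = M x * g.σf x

end LogGas

/-- Energy difference `τ_t` associated with the transport `ψ` of `ξ`. -/
def tauT (g : LogGas) (ξ ψ : ℝ → ℝ) (t c x : ℝ) : ℝ :=
  (∫ y, -Real.log |phiT ψ t x - phiT ψ t y| ∂g.μV)
    + (g.V (phiT ψ t x) + t * ξ (phiT ψ t x))
    - (∫ y, -Real.log |x - y| ∂g.μV) - g.V x - t * c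

/-- `Main₁ = I_{V_t}(φ_t#μ_V) - I_V(μ_V) - t ∫ ξ dμ_V`. -/
def Main1 (g : LogGas) (ξ ψ : ℝ → ℝ) (t : ℝ) : ℝ :=
  enFun (fun x => g.V x + t * ξ x) (g.μV.map (phiT ψ t)) - enFun g.V g.μV
    - t * ∫ x, ξ x ∂g.μV

/-- `Error₁ = (1-β) ∫ log φ_t' dμ_V`. -/
def Err1 (g : LogGas) (ψ : ℝ → ℝ) (t : ℝ) : ℝ :=
  (1 - g.β) * ∫ x, Real.log (1 + t * deriv ψ x) ∂g.μV

/-- The kernel `K_t(x,y) = -log |(φ_t x - φ_t y)/(x-y)|`, extended by `-log φ_t'` on the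
diagonal. -/
def Kker (ψ : ℝ → ℝ) (t x y : ℝ) : ℝ :=
  if x = y then -Real.log (1 + t * deriv ψ x)
  else -Real.log (|phiT ψ t x - phiT ψ t y| / |x - y|)

/-- `Error₂`. -/
def Err2 (g : LogGas) (ψ : ℝ → ℝ) (t : ℝ) (N : ℕ) (X : Fin N → ℝ) : ℝ :=
  fluctPair g.μV N (Kker ψ t) X

/-- `Error₃`. -/
def Err3 (g : LogGas) (ξ ψ : ℝ → ℝ) (t c : ℝ) (N : ℕ) (X : Fin N → ℝ) : ℝ :=
  fluct g.μV N (fun x => (1 - 1/g.β) * Real.log (1 + t * deriv ψ x) + N * tauT g ξ ψ t c x) X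

theorem stmt5 (V : ℝ → ℝ) (hV : Continuous V)
    (ρ : ℝ → ℝ) (M : ℝ) (hρ0 : ∀ x, 0 ≤ ρ x) (hρM : ∀ x, ρ x ≤ M)
    (hρc : HasCompactSupport ρ)
    (μ : Measure ℝ) (hμ : μ = volume.withDensity fun x => ENNReal.ofReal (ρ x))
    (hprob : IsProbabilityMeasure μ)
    (hlog : Integrable (fun p : ℝ × ℝ => Real.log |p.1 - p.2|) (μ.prod μ))
    (cV : ℝ) (hEL : ∀ x ∈ tsupport ρ, (∫ y, -Real.log |x - y| ∂μ) + V x = cV)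
    (N : ℕ) (X : Fin N → ℝ) (hX : Function.Injective X) :
    Hamil V N X
      = (N:ℝ)^2 * enFun V μ
        + N * ∑ i : Fin N, ((∫ y, -Real.log |X i - y| ∂μ) + V (X i) - cV)
        + nextOrderF N X μ := by
  have hKc : μ (tsupport ρ)ᶜ = 0 := by
    rw [hμ, withDensity_apply _ (isClosed_tsupport ρ).measurableSet.compl]
    have hz : ∫⁻ x in (tsupport ρ)ᶜ, ENNReal.ofReal (ρ x)
        = ∫⁻ _x in (tsupport ρ)ᶜ, (0:ENNReal) :=
      setLIntegral_congr_fun (isClosed_tsupport ρ).measurableSet.compl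
        (fun x hx => by
          simp [image_eq_zero_of_notMem_tsupport hx])
    rw [hz]; simp
  have hae : ∀ᵐ x ∂μ, x ∈ tsupport ρ := by
    rw [ae_iff]; exact hKc
  have hint_h : Integrable (fun x => ∫ y, -Real.log |x - y| ∂μ) μ := by
    simpa using (hlog.neg).integral_prod_left
  have hint_V : Integrable V μ := by
    have h1 : IntegrableOn V (tsupport ρ) μ := hV.continuousOn.integrableOn_compact hρc
    rwa [IntegrableOn, Measure.restrict_eq_self_of_ae_mem hae] at h1
  have key : (∫ x, (∫ y, -Real.log |x - y| ∂μ) ∂μ) + ∫ x, V x ∂μ = cV := by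
    rw [← integral_add hint_h hint_V]
    have : ∫ x, ((∫ y, -Real.log |x - y| ∂μ) + V x) ∂μ = ∫ _x, cV ∂μ :=
      integral_congr_ae (hae.mono fun x hx => hEL x hx)
    rw [this, integral_const]
    simp
  have hsum : ∑ i : Fin N, ((∫ y, -Real.log |X i - y| ∂μ) + V (X i) - cV)
      = (∑ i : Fin N, ∫ y, -Real.log |X i - y| ∂μ) + (∑ i : Fin N, V (X i)) - N * cV := by
    rw [Finset.sum_sub_distrib, Finset.sum_add_distrib]
    simp [mul_comm]
  rw [Hamil, enFun, nextOrderF, hsum]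
  nlinarith [key, sq_nonneg (N:ℝ)]


end
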